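/- Let U ⊆ ℝ^m be open, let d ≥ 0, and let a₀, a₁, …, a_d : U → ℝ be continuous functions, each Lebesgue-integrable on U. Define A(x,t) = a₀(x) + a₁(x)·t + ⋯ + a_d(x)·t^d. If lim_{t→0⁺} t^{−(d+1)} ∫_{−t}^{t} ∫_U |A(x,s)| dx ds = 0, then a_i(x) = 0 for every x ∈ U and every i ∈ {0, 1, …, d}. -/

import Mathlib

open MeasureTheory Set Filter

set_option maxHeartbeats 1000000 in
theorem poly_coefficients_vanish_of_slow_integral {m : ℕ}
    (U : Set (EuclideanSpace ℝ (Fin m))) (hU : IsOpen U)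
    (d : ℕ) (a : Fin (d + 1) → EuclideanSpace ℝ (Fin m) → ℝ)
    (hcont : ∀ i, ContinuousOn (a i) U)
    (hint : ∀ i, MeasureTheory.IntegrableOn (a i) U)
    (A : EuclideanSpace ℝ (Fin m) → ℝ → ℝ)
    (hA : ∀ x t, A x t = ∑ i : Fin (d + 1), a i x * t ^ (i : ℕ))
    (hlim : Filter.Tendsto
      (fun t : ℝ => (∫ s in (-t)..t, ∫ x in U, |A x s|) / t ^ (d + 1))
      (nhdsWithin 0 (Set.Ioi 0)) (nhds 0)) :
    ∀ x ∈ U, ∀ i, a i x = 0 := by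
  classical
  by_contra hcon
  push_neg at hcon
  obtain ⟨x₀, hx₀U, i₀, hi₀⟩ := hcon
  set c : ℝ := |a i₀ x₀| with hc
  have hc0 : 0 < c := abs_pos.mpr hi₀
  -- find a small closed ball around x₀ inside U where a i₀ is close to a i₀ x₀
  have hcA : ContinuousAt (a i₀) x₀ := (hcont i₀).continuousAt (hU.mem_nhds hx₀U)
  have hnear : {x | |a i₀ x - a i₀ x₀| < c / 2} ∈ nhds x₀ := by
    have := hcA (Metric.ball_mem_nhds (a i₀ x₀) (by positivity : (0:ℝ) < c / 2))
    simpa [Set.preimage, Metric.ball, Real.dist_eq] using this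
  have hmem : ({x | |a i₀ x - a i₀ x₀| < c / 2} ∩ U) ∈ nhds x₀ :=
    inter_mem hnear (hU.mem_nhds hx₀U)
  obtain ⟨r, hr0, hrsub⟩ := Metric.nhds_basis_closedBall.mem_iff.mp hmem
  set B := Metric.closedBall x₀ r with hBdef
  have hBU : B ⊆ U := fun x hx => (hrsub hx).2
  have hBdiff : ∀ x ∈ B, |a i₀ x - a i₀ x₀| < c / 2 := fun x hx => (hrsub hx).1
  have hBmeas : MeasurableSet B := measurableSet_closedBall
  have hBfin : volume B ≠ ⊤ := (isCompact_closedBall _ _).measure_lt_top.ne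
  have hBpos : 0 < volume B :=
    lt_of_lt_of_le (Metric.measure_ball_pos volume x₀ hr0)
      (measure_mono Metric.ball_subset_closedBall)
  have hv : 0 < (volume B).toReal := ENNReal.toReal_pos hBpos.ne' hBfin
  have hIB : ∀ i, IntegrableOn (a i) B := fun i => (hint i).mono_set hBU
  set b : Fin (d + 1) → ℝ := fun i => ∫ x in B, a i x with hbdef
  -- the i₀-th moment is nonzero
  set σ : ℝ := if 0 ≤ a i₀ x₀ then 1 else -1 with hσ
  have hσa : ∀ x ∈ B, c / 2 ≤ σ * a i₀ x := by
    intro x hx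
    have h1 := hBdiff x hx
    rcases abs_lt.mp h1 with ⟨h1a, h1b⟩
    rcases le_or_gt 0 (a i₀ x₀) with h | h
    · have hce : c = a i₀ x₀ := abs_of_nonneg h
      rw [hσ, if_pos h, one_mul]; linarith
    · have hce : c = -a i₀ x₀ := abs_of_neg h
      rw [hσ, if_neg (not_le.mpr h), neg_one_mul]; linarith
  have hb0 : b i₀ ≠ 0 := by
    have hige : c / 2 * (volume B).toReal ≤ ∫ x in B, σ * a i₀ x :=
      setIntegral_ge_of_const_le_real hBmeas hBfin hσa ((hIB i₀).const_mul σ)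
    rw [integral_const_mul] at hige
    intro hb
    rw [hbdef] at hb
    simp only [hb, mul_zero] at hige
    nlinarith
  -- j : the least index with b j ≠ 0
  have hex : ∃ n : ℕ, ∃ h : n < d + 1, b ⟨n, h⟩ ≠ 0 :=
    ⟨(i₀ : ℕ), i₀.isLt, by simpa using hb0⟩
  set j := Nat.find hex with hjdef
  obtain ⟨hjd, hbj⟩ := Nat.find_spec hex
  have hjmin : ∀ i : Fin (d + 1), (i : ℕ) < j → b i = 0 := by
    intro i hi
    by_contra hne
    exact Nat.find_min hex hi ⟨i.isLt, by simpa using hne⟩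
  set jf : Fin (d + 1) := ⟨j, hjd⟩ with hjf
  set cb : ℝ := |b jf| with hcbdef
  have hcb : 0 < cb := abs_pos.mpr hbj
  set S : ℝ := ∑ i : Fin (d + 1), |b i| with hSdef
  have hS0 : 0 ≤ S := Finset.sum_nonneg fun i _ => abs_nonneg _
  set δ : ℝ := min 1 (cb / (2 * (S + 1))) with hδdef
  have hδ0 : 0 < δ := lt_min one_pos (by positivity)
  have hδ1 : δ ≤ 1 := min_le_left _ _
  -- lower bound for |q s| near 0
  have hq : ∀ s : ℝ, 0 < s → s ≤ δ →
      cb / 2 * s ^ j ≤ |∑ i : Fin (d + 1), b i * s ^ (i : ℕ)| := by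
    intro s hs hsδ
    have hs1 : s ≤ 1 := hsδ.trans (min_le_left _ _)
    have hsδ2 : s ≤ cb / (2 * (S + 1)) := hsδ.trans (min_le_right _ _)
    have key : |(∑ i : Fin (d + 1), b i * s ^ (i : ℕ)) - b jf * s ^ j| ≤ S * s ^ (j + 1) := by
      have hsum : (∑ i : Fin (d + 1), b i * s ^ (i : ℕ)) - b jf * s ^ j
          = ∑ i ∈ Finset.univ.erase jf, b i * s ^ (i : ℕ) := by
        rw [Finset.sum_erase_eq_sub (Finset.mem_univ jf)]
      rw [hsum]
      calc |∑ i ∈ Finset.univ.erase jf, b i * s ^ (i : ℕ)|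
          ≤ ∑ i ∈ Finset.univ.erase jf, |b i * s ^ (i : ℕ)| :=
            Finset.abs_sum_le_sum_abs _ _
        _ ≤ ∑ i ∈ Finset.univ.erase jf, |b i| * s ^ (j + 1) := by
            apply Finset.sum_le_sum
            intro i hi
            rw [abs_mul, abs_pow, abs_of_pos hs]
            have hine : (i : ℕ) ≠ j := by
              intro h
              exact (Finset.mem_erase.mp hi).1 (by rw [hjf]; exact Fin.ext h)
            rcases lt_or_gt_of_ne hine with hlt | hgt
            · rw [hjmin i hlt, abs_zero, zero_mul, zero_mul]
            · exact mul_le_mul_of_nonneg_left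
                (pow_le_pow_of_le_one hs.le hs1 hgt) (abs_nonneg _)
        _ ≤ S * s ^ (j + 1) := by
            rw [← Finset.sum_mul]
            refine mul_le_mul_of_nonneg_right ?_ (by positivity)
            exact Finset.sum_le_sum_of_subset_of_nonneg (Finset.subset_univ _)
              (fun i _ _ => abs_nonneg _)
    have h2 : |b jf * s ^ j| - |(∑ i : Fin (d + 1), b i * s ^ (i : ℕ)) - b jf * s ^ j|
        ≤ |∑ i : Fin (d + 1), b i * s ^ (i : ℕ)| := by
      have := abs_sub_abs_le_abs_sub (b jf * s ^ j) (∑ i : Fin (d + 1), b i * s ^ (i : ℕ))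
      rw [abs_sub_comm] at this
      linarith
    rw [abs_mul, abs_pow, abs_of_pos hs] at h2
    have h3 : S * s ^ (j + 1) ≤ cb / 2 * s ^ j := by
      rw [pow_succ]
      have hSs : S * s ≤ cb / 2 := by
        calc S * s ≤ S * (cb / (2 * (S + 1))) := mul_le_mul_of_nonneg_left hsδ2 hS0
          _ ≤ cb / 2 := by
            have h1 : (0:ℝ) < S + 1 := by positivity
            have he : S * (cb / (2 * (S + 1))) = cb / 2 * (S / (S + 1)) := by
              field_simp
            rw [he]
            have h2 : S / (S + 1) ≤ 1 := (div_le_one h1).mpr (by linarith)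
            nlinarith
      nlinarith [pow_nonneg hs.le j]
    rw [← hcbdef] at h2
    linarith
  -- integrability of A in x and the key bound F s ≥ |q s|
  have hAint : ∀ s : ℝ, IntegrableOn (fun x => A x s) U := by
    intro s
    have he : (fun x => A x s) = fun x => ∑ i : Fin (d + 1), a i x * s ^ (i : ℕ) :=
      funext fun x => hA x s
    rw [IntegrableOn, he]
    exact integrable_finset_sum _ fun i _ => (hint i).mul_const _
  have hFabs : ∀ s : ℝ, IntegrableOn (fun x => |A x s|) U := fun s => (hAint s).abs
  have hqint : ∀ s : ℝ, (∫ x in B, A x s) = ∑ i : Fin (d + 1), b i * s ^ (i : ℕ) := by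
    intro s
    have he : (fun x => A x s) = fun x => ∑ i : Fin (d + 1), a i x * s ^ (i : ℕ) :=
      funext fun x => hA x s
    rw [he, integral_finset_sum _ fun i _ => (hIB i).mul_const _]
    exact Finset.sum_congr rfl fun i _ => integral_mul_const _ _
  have hFq : ∀ s : ℝ, |∑ i : Fin (d + 1), b i * s ^ (i : ℕ)| ≤ ∫ x in U, |A x s| := by
    intro s
    calc |∑ i : Fin (d + 1), b i * s ^ (i : ℕ)| = |∫ x in B, A x s| := by rw [hqint s]
      _ ≤ ∫ x in B, |A x s| := by
          simpa [Real.norm_eq_abs] using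
            norm_integral_le_integral_norm (μ := volume.restrict B) (fun x => A x s)
      _ ≤ ∫ x in U, |A x s| :=
          setIntegral_mono_set (hFabs s)
            (Eventually.of_forall fun x => abs_nonneg _) hBU.eventuallyLE
  -- continuity of F
  have hFcont : Continuous fun s : ℝ => ∫ x in U, |A x s| := by
    rw [continuous_iff_continuousAt]
    intro s₀
    set R : ℝ := |s₀| + 1 with hRdef
    apply continuousAt_of_dominated
      (bound := fun x => ∑ i : Fin (d + 1), |a i x| * R ^ (i : ℕ))
    · exact Eventually.of_forall fun s => (hFabs s).aestronglyMeasurable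
    · have hev : ∀ᶠ s in nhds s₀, |s| ≤ R := by
        have hb : Metric.closedBall s₀ 1 ∈ nhds s₀ := Metric.closedBall_mem_nhds _ one_pos
        filter_upwards [hb] with s hs
        have h1 : |s - s₀| ≤ 1 := by simpa [Real.dist_eq] using hs
        have h2 : |s| ≤ |s - s₀| + |s₀| := by
          calc |s| = |s - s₀ + s₀| := by ring_nf
            _ ≤ |s - s₀| + |s₀| := abs_add_le _ _
        rw [hRdef]; linarith
      filter_upwards [hev] with s hs
      refine Eventually.of_forall fun x => ?_
      rw [Real.norm_eq_abs, abs_abs, hA]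
      calc |∑ i : Fin (d + 1), a i x * s ^ (i : ℕ)|
          ≤ ∑ i : Fin (d + 1), |a i x * s ^ (i : ℕ)| := Finset.abs_sum_le_sum_abs _ _
        _ ≤ ∑ i : Fin (d + 1), |a i x| * R ^ (i : ℕ) := by
            refine Finset.sum_le_sum fun i _ => ?_
            rw [abs_mul, abs_pow]
            exact mul_le_mul_of_nonneg_left
              (pow_le_pow_left₀ (abs_nonneg _) hs _) (abs_nonneg _)
    · exact integrable_finset_sum _ fun i _ => (hint i).abs.mul_const _
    · refine Eventually.of_forall fun x => ?_
      have he : (fun s : ℝ => |A x s|)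
          = fun s => |∑ i : Fin (d + 1), a i x * s ^ (i : ℕ)| :=
        funext fun s => by rw [hA]
      rw [he]
      exact ((continuous_finset_sum _ fun i _ =>
        (continuous_const.mul (continuous_pow _))).abs).continuousAt
  have hFnn : ∀ s : ℝ, 0 ≤ ∫ x in U, |A x s| :=
    fun s => integral_nonneg fun x => abs_nonneg _
  -- extract a contradictory t
  set ε : ℝ := cb / 2 * (1 / 2 : ℝ) ^ (d + 1) with hεdef
  have hεpos : 0 < ε := by positivity
  have hev1 : ∀ᶠ t in nhdsWithin 0 (Set.Ioi 0),
      |(∫ s in (-t)..t, ∫ x in U, |A x s|) / t ^ (d + 1)| < ε := by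
    have := Metric.tendsto_nhds.mp hlim ε hεpos
    filter_upwards [this] with t ht
    rw [Real.dist_eq, sub_zero] at ht
    exact ht
  have hev2 : ∀ᶠ t in nhdsWithin 0 (Set.Ioi 0), t ∈ Ioc (0:ℝ) δ :=
    eventually_of_mem (Ioc_mem_nhdsGT hδ0) fun t ht => ht
  obtain ⟨t, hlt, ht0, htδ⟩ := (hev1.and hev2).exists
  have ht1 : t ≤ 1 := htδ.trans hδ1
  -- lower bound on the ratio at t
  have hii1 : IntervalIntegrable (fun s => ∫ x in U, |A x s|) volume (-t) (t / 2) :=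
    hFcont.intervalIntegrable _ _
  have hii2 : IntervalIntegrable (fun s => ∫ x in U, |A x s|) volume (t / 2) t :=
    hFcont.intervalIntegrable _ _
  have hsplit : (∫ s in (-t)..t, ∫ x in U, |A x s|)
      = (∫ s in (-t)..(t/2), ∫ x in U, |A x s|) + ∫ s in (t/2)..t, ∫ x in U, |A x s| :=
    (intervalIntegral.integral_add_adjacent_intervals hii1 hii2).symm
  have h1 : 0 ≤ ∫ s in (-t)..(t/2), ∫ x in U, |A x s| :=
    intervalIntegral.integral_nonneg (by linarith) fun s _ => hFnn s
  have hptw : ∀ s ∈ Icc (t / 2) t, cb / 2 * (t / 2) ^ j ≤ ∫ x in U, |A x s| := by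
    intro s hs
    obtain ⟨hs1, hs2⟩ := hs
    have hspos : 0 < s := lt_of_lt_of_le (by linarith) hs1
    have hsδ : s ≤ δ := hs2.trans htδ
    calc cb / 2 * (t / 2) ^ j ≤ cb / 2 * s ^ j :=
          mul_le_mul_of_nonneg_left (pow_le_pow_left₀ (by positivity) hs1 j) (by positivity)
      _ ≤ |∑ i : Fin (d + 1), b i * s ^ (i : ℕ)| := hq s hspos hsδ
      _ ≤ ∫ x in U, |A x s| := hFq s
  have h2 : cb / 2 * ((t - t / 2) * (t / 2) ^ j) ≤ ∫ s in (t/2)..t, ∫ x in U, |A x s| := by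
    have hmono := intervalIntegral.integral_mono_on (by linarith : t / 2 ≤ t)
      (intervalIntegrable_const (c := cb / 2 * (t / 2) ^ j)) hii2 hptw
    rw [intervalIntegral.integral_const, smul_eq_mul] at hmono
    calc cb / 2 * ((t - t / 2) * (t / 2) ^ j)
        = (t - t / 2) * (cb / 2 * (t / 2) ^ j) := by ring
      _ ≤ _ := hmono
  have hfinal : ε ≤ (∫ s in (-t)..t, ∫ x in U, |A x s|) / t ^ (d + 1) := by
    rw [le_div_iff₀ (by positivity : (0:ℝ) < t ^ (d + 1)), hsplit]
    have e2 : (t / 2) ^ (d + 1) ≤ (t / 2) ^ (j + 1) :=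
      pow_le_pow_of_le_one (by positivity) (by linarith) (by omega)
    have e3 : (t / 2) ^ (d + 1) = t ^ (d + 1) * (1 / 2 : ℝ) ^ (d + 1) := by
      rw [← mul_pow]; ring_nf
    calc ε * t ^ (d + 1) = cb / 2 * (t / 2) ^ (d + 1) := by rw [hεdef, e3]; ring
      _ ≤ cb / 2 * (t / 2) ^ (j + 1) := mul_le_mul_of_nonneg_left e2 (by positivity)
      _ = cb / 2 * ((t - t / 2) * (t / 2) ^ j) := by rw [pow_succ]; ring
      _ ≤ ∫ s in (t/2)..t, ∫ x in U, |A x s| := h2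
      _ ≤ (∫ s in (-t)..(t/2), ∫ x in U, |A x s|)
          + ∫ s in (t/2)..t, ∫ x in U, |A x s| := le_add_of_nonneg_left h1
  have := le_abs_self ((∫ s in (-t)..t, ∫ x in U, |A x s|) / t ^ (d + 1))
  linarith
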